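/- Let p ≥ 1, t ∈ (1,2], and let n be a positive integer. Then Γ_{⌊t^n⌋}(Kₙ^p) ≤ (n/(n + l(n,t)))^{1/p} ≤ (n/(n + ⌊b(t)·n⌋))^{1/p}. -/

import Mathlib

open Real Set Pointwise

/-- The covering functional `Γ_m(K)`: the infimum of all `γ > 0` such that `K` can be
covered by `m` translates of `γ • K`. -/
noncomputable def coveringFunctional {n : ℕ} (m : ℕ) (K : Set (Fin n → ℝ)) : ℝ :=
  sInf {γ : ℝ | 0 < γ ∧ ∃ C : Set (Fin n → ℝ), C.Finite ∧ C.ncard = m ∧ K ⊆ C + γ • K}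

/-- `Kₙ^p`: the unit ball of `ℓ_p^n`. -/
noncomputable def Kp (n : ℕ) (p : ℝ) : Set (Fin n → ℝ) :=
  {x | (∑ i, |x i| ^ p) ≤ 1}

/-- `g x = 2^x * (1+x)^(1+x) / x^x` (real powers). -/
noncomputable def g (x : ℝ) : ℝ := 2 ^ x * (1 + x) ^ (1 + x) / x ^ x

noncomputable def boxM (n l : ℕ) : Finset (Fin n → ℤ) :=
  (Fintype.piFinset fun _ => Finset.Icc (-(l:ℤ)) (l:ℤ)).filter (fun m => ∑ i, |m i| ≤ (l:ℤ))


lemma real_rpow_add_le {x y z : ℝ} (hx : 0 ≤ x) (hy : 0 ≤ y) (hz0 : 0 ≤ z) (hz1 : z ≤ 1) :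
    (x + y) ^ z ≤ x ^ z + y ^ z := by
  have h := NNReal.rpow_add_le_add_rpow ⟨x, hx⟩ ⟨y, hy⟩ hz0 hz1
  exact_mod_cast h

lemma key_pow {p a b : ℝ} (hp : 1 ≤ p) (hb : 0 ≤ b) (hba : b ≤ a) :
    (a ^ p⁻¹ - b ^ p⁻¹) ^ p ≤ a - b := by
  have hp0 : (0:ℝ) < p := lt_of_lt_of_le one_pos hp
  have ha : 0 ≤ a := le_trans hb hba
  have h1 : a ^ p⁻¹ ≤ (a - b) ^ p⁻¹ + b ^ p⁻¹ := by
    have := real_rpow_add_le (x := a - b) (y := b) (z := p⁻¹) (by linarith) hb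
      (by positivity) (by rw [inv_le_one₀ (by linarith)]; exact hp)
    simpa [sub_add_cancel] using this
  have h2 : 0 ≤ a ^ p⁻¹ - b ^ p⁻¹ := by
    have := Real.rpow_le_rpow hb hba (by positivity : (0:ℝ) ≤ p⁻¹)
    linarith
  calc (a ^ p⁻¹ - b ^ p⁻¹) ^ p ≤ ((a - b) ^ p⁻¹) ^ p :=
        Real.rpow_le_rpow h2 (by linarith) (le_of_lt hp0)
    _ = a - b := Real.rpow_inv_rpow (by linarith) (ne_of_gt hp0)


lemma exists_d {n : ℕ} (K0 : Fin n → ℕ) (Sd : ℕ) (h : Sd ≤ ∑ i, K0 i) :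
    ∃ d : Fin n → ℕ, (∀ i, d i ≤ K0 i) ∧ ∑ i, d i = Sd := by
  induction Sd with
  | zero => exact ⟨0, fun i => Nat.zero_le _, by simp⟩
  | succ m ih =>
    obtain ⟨d, hd, hsum⟩ := ih (le_of_lt (Nat.lt_of_succ_le h))
    have hlt : ∑ i, d i < ∑ i, K0 i := by omega
    have : ∃ i, d i < K0 i := by
      by_contra hc
      push_neg at hc
      exact absurd (Finset.sum_le_sum fun i _ => hc i) (not_le.mpr hlt)
    obtain ⟨j, hj⟩ := this
    refine ⟨Function.update d j (d j + 1), fun i => ?_, ?_⟩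
    · rcases eq_or_ne i j with rfl | hij
      · simp; omega
      · simp [Function.update_of_ne hij, hd i]
    · rw [Finset.sum_update_of_mem (Finset.mem_univ j)]
      rw [Finset.sum_eq_sum_sdiff_singleton_add (Finset.mem_univ j) d] at hsum
      omega

lemma exists_round {n l : ℕ} (z : Fin n → ℝ) (hz : ∀ i, 0 ≤ z i)
    (hsum : ∑ i, z i ≤ (n : ℝ) + l) :
    ∃ k : Fin n → ℕ, (∀ i, (k i : ℝ) ≤ z i) ∧ (∑ i, k i ≤ l) ∧
      (∑ i, (z i - (k i : ℝ))) ≤ n := by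
  classical
  set K0 : Fin n → ℕ := fun i => ⌊z i⌋₊ with hK0
  have hK0le : ∀ i, (K0 i : ℝ) ≤ z i := fun i => Nat.floor_le (hz i)
  have hzlt : ∀ i, z i < (K0 i : ℝ) + 1 := fun i => Nat.lt_floor_add_one _
  set S : ℕ := ∑ i, K0 i with hS
  rcases le_or_gt S l with hSl | hlS
  · refine ⟨K0, hK0le, hSl, ?_⟩
    calc ∑ i, (z i - (K0 i : ℝ)) ≤ ∑ _i : Fin n, (1:ℝ) :=
          Finset.sum_le_sum fun i _ => by have := hzlt i; linarith
      _ = n := by simp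
  · obtain ⟨d, hd, hdsum⟩ := exists_d K0 (S - l) (Nat.sub_le _ _)
    set k : Fin n → ℕ := fun i => K0 i - d i with hk
    have hkey : ∑ i, k i = l := by
      have h1 : ((∑ i, k i : ℕ) : ℤ) = (S : ℤ) - ((S - l : ℕ) : ℤ) := by
        rw [Nat.cast_sum, Finset.sum_congr rfl fun i _ => Nat.cast_sub (hd i),
          Finset.sum_sub_distrib, ← Nat.cast_sum, ← Nat.cast_sum, ← hS, hdsum]
      omega
    refine ⟨k, fun i => ?_, le_of_eq hkey, ?_⟩
    · have : ((k i : ℕ) : ℝ) ≤ (K0 i : ℝ) := by exact_mod_cast Nat.sub_le _ _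
      linarith [hK0le i]
    · have hcast : ∑ i, ((k i : ℕ) : ℝ) = (l : ℝ) := by
        rw [← Nat.cast_sum, hkey]
      rw [Finset.sum_sub_distrib, hcast]
      linarith


/-- the finset of integer vectors in the cross-polytope of radius `l`. -/
lemma mem_boxM {n l : ℕ} {m : Fin n → ℤ} (h : ∑ i, |m i| ≤ (l:ℤ)) : m ∈ boxM n l := by
  refine Finset.mem_filter.mpr ⟨Fintype.mem_piFinset.mpr fun i => ?_, h⟩
  rw [Finset.mem_Icc, ← abs_le]
  exact le_trans (Finset.single_le_sum (fun j _ => abs_nonneg (m j)) (Finset.mem_univ i)) h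

noncomputable def msum {n : ℕ} (l : ℕ) (kk : Fin n → ℕ) : Multiset (Fin (n+1)) :=
  (∑ i, Multiset.replicate (kk i) (Fin.castSucc i)) + Multiset.replicate (l - ∑ i, kk i) (Fin.last n)

lemma card_msum {n l : ℕ} (kk : Fin n → ℕ) (h : ∑ i, kk i ≤ l) : Multiset.card (msum l kk) = l := by
  simp only [msum, Multiset.card_add, Multiset.card_replicate]
  rw [Multiset.card_sum]
  simp only [Multiset.card_replicate]
  omega

lemma count_msum {n l : ℕ} (kk : Fin n → ℕ) (j : Fin n) :
    Multiset.count (Fin.castSucc j) (msum l kk) = kk j := by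
  rw [msum, Multiset.count_add, Multiset.count_sum', Multiset.count_replicate,
    if_neg (Fin.castSucc_lt_last j).ne']
  simp [Multiset.count_replicate, Fin.castSucc_inj, eq_comm]

lemma card_image_le {n l : ℕ} :
    ((boxM n l).image (fun m i => (m i).natAbs)).card ≤ (n + l).choose n := by
  classical
  have hsum : ∀ kk ∈ (boxM n l).image (fun m i => (m i).natAbs), ∑ i, kk i ≤ l := by
    intro kk hkk
    obtain ⟨m, hm, rfl⟩ := Finset.mem_image.mp hkk
    have hm2 := (Finset.mem_filter.mp hm).2
    have habs : ∑ i, |m i| = ∑ i, (((m i).natAbs : ℤ)) :=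
      Finset.sum_congr rfl fun i _ => (m i).abs_eq_natAbs
    have : ((∑ i, (m i).natAbs : ℕ) : ℤ) ≤ (l : ℤ) := by
      rw [Nat.cast_sum, ← habs]; exact hm2
    exact_mod_cast this
  have hinj : Set.InjOn
      (fun kk => if h : ∑ i, kk i ≤ l then
          (⟨msum l kk, card_msum kk h⟩ : Sym (Fin (n+1)) l)
        else ⟨Multiset.replicate l (Fin.last n), by simp⟩)
      ((boxM n l).image (fun m i => (m i).natAbs)) := by
    intro kk hkk kk' hkk' heq
    simp only at heq
    rw [dif_pos (hsum _ hkk), dif_pos (hsum _ hkk')] at heq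
    have hmul : msum l kk = msum l kk' := congrArg Sym.toMultiset heq
    funext j
    rw [← count_msum kk j, ← count_msum kk' j, hmul]
  calc ((boxM n l).image (fun m i => (m i).natAbs)).card
      ≤ (Finset.univ : Finset (Sym (Fin (n+1)) l)).card :=
        Finset.card_le_card_of_injOn _ (fun _ _ => Finset.mem_univ _) hinj
    _ = (n + l).choose n := by
        rw [Finset.card_univ, Sym.card_sym_eq_choose, Fintype.card_fin,
          show n + 1 + l - 1 = n + l by omega,
          ← Nat.choose_symm (by omega : l ≤ n + l),
          show n + l - l = n by omega]

lemma card_boxM_le {n l : ℕ} : (boxM n l).card ≤ 2 ^ l * (n + l).choose n := by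
  classical
  have hfiber : ∀ kk ∈ (boxM n l).image (fun m i => (m i).natAbs),
      ((boxM n l).filter (fun m => (fun i => (m i).natAbs) = kk)).card ≤ 2 ^ l := by
    intro kk hkk
    obtain ⟨m0, hm0, hfe⟩ := Finset.mem_image.mp hkk
    have hsumkk : ∑ i, kk i ≤ l := by
      subst hfe
      have hm2 := (Finset.mem_filter.mp hm0).2
      have habs : ∑ i, |m0 i| = ∑ i, (((m0 i).natAbs : ℤ)) :=
        Finset.sum_congr rfl fun i _ => (m0 i).abs_eq_natAbs
      have : ((∑ i, (m0 i).natAbs : ℕ) : ℤ) ≤ (l : ℤ) := by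
        rw [Nat.cast_sum, ← habs]; exact hm2
      exact_mod_cast this
    have hcard2 : Fintype.card {i : Fin n // kk i ≠ 0} ≤ l := by
      rw [Fintype.card_subtype]
      calc (Finset.univ.filter fun i => kk i ≠ 0).card
          = ∑ i ∈ Finset.univ.filter (fun i => kk i ≠ 0), 1 := by
            rw [Finset.card_eq_sum_ones]
        _ ≤ ∑ i ∈ Finset.univ.filter (fun i => kk i ≠ 0), kk i :=
            Finset.sum_le_sum fun i hi =>
              Nat.one_le_iff_ne_zero.mpr (Finset.mem_filter.mp hi).2
        _ ≤ ∑ i, kk i := Finset.sum_le_sum_of_subset (Finset.filter_subset _ _)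
        _ ≤ l := hsumkk
    calc ((boxM n l).filter (fun m => (fun i => (m i).natAbs) = kk)).card
        ≤ (Finset.univ : Finset ({i : Fin n // kk i ≠ 0} → Bool)).card := by
          apply Finset.card_le_card_of_injOn
            (fun m => fun i => decide (0 ≤ m i.1))
            (fun _ _ => Finset.mem_univ _)
          intro m hm m' hm' heq
          have h1 : ∀ i, (m i).natAbs = kk i :=
            fun i => congrFun (Finset.mem_filter.mp hm).2 i
          have h2 : ∀ i, (m' i).natAbs = kk i :=
            fun i => congrFun (Finset.mem_filter.mp hm').2 i
          funext i
          rcases eq_or_ne (kk i) 0 with h0 | h0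
          · have := h1 i; have := h2 i; omega
          · have hbe := congrFun heq ⟨i, h0⟩
            simp only [decide_eq_decide] at hbe
            have e1 := h1 i; have e2 := h2 i
            by_cases hm0i : 0 ≤ m i
            · have := hbe.mp hm0i; omega
            · have : ¬ 0 ≤ m' i := fun h => hm0i (hbe.mpr h); omega
      _ = 2 ^ Fintype.card {i : Fin n // kk i ≠ 0} := by
          rw [Finset.card_univ, Fintype.card_fun, Fintype.card_bool]
      _ ≤ 2 ^ l := Nat.pow_le_pow_right (by norm_num) hcard2
  calc (boxM n l).card ≤ 2 ^ l * ((boxM n l).image (fun m i => (m i).natAbs)).card :=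
        Finset.card_le_mul_card_image _ _ hfiber
    _ ≤ 2 ^ l * (n + l).choose n := Nat.mul_le_mul_left _ card_image_le

noncomputable def phi (n l : ℕ) (p : ℝ) (m : Fin n → ℤ) : Fin n → ℝ :=
  fun i => if m i < 0 then -((((m i).natAbs : ℝ) / ((n : ℝ) + l)) ^ (1/p))
    else (((m i).natAbs : ℝ) / ((n : ℝ) + l)) ^ (1/p)

lemma cover {p : ℝ} (hp : 1 ≤ p) {n : ℕ} (l : ℕ) (hn : 0 < n) :
    Kp n p ⊆ (phi n l p '' (boxM n l : Set (Fin n → ℤ)))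
      + (((n:ℝ) / ((n:ℝ) + l)) ^ (1/p)) • Kp n p := by
  intro x hx
  have hp0 : (0:ℝ) < p := lt_of_lt_of_le one_pos hp
  have hN : (0:ℝ) < (n:ℝ) + l := by positivity
  have hn' : (0:ℝ) < (n:ℝ) := by exact_mod_cast hn
  set N : ℝ := (n:ℝ) + l with hNdef
  set y : Fin n → ℝ := fun i => |x i| ^ p with hy
  have hy0 : ∀ i, 0 ≤ y i := fun i => Real.rpow_nonneg (abs_nonneg _) p
  have hysum : ∑ i, y i ≤ 1 := hx
  obtain ⟨k, hk1, hk2, hk3⟩ := exists_round (fun i => N * y i)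
    (fun i => mul_nonneg hN.le (hy0 i))
    (by
      rw [← Finset.mul_sum]
      calc N * ∑ i, y i ≤ N * 1 := by
            exact mul_le_mul_of_nonneg_left hysum hN.le
        _ = (n:ℝ) + l := by rw [mul_one])
  set m : Fin n → ℤ := fun i => if x i < 0 then -(k i : ℤ) else (k i : ℤ) with hm
  have hmabs : ∀ i, (m i).natAbs = k i := by
    intro i
    simp only [hm]
    split <;> simp
  have hmbox : m ∈ boxM n l := by
    apply mem_boxM
    have : ∀ i, |m i| = ((k i : ℕ) : ℤ) := by
      intro i; rw [Int.abs_eq_natAbs, hmabs i]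
    rw [Finset.sum_congr rfl fun i _ => this i, ← Nat.cast_sum]
    exact_mod_cast hk2
  set β : Fin n → ℝ := fun i => ((k i : ℝ) / N) ^ (1/p) with hβ
  have hkN : ∀ i, (k i : ℝ) / N ≤ y i := by
    intro i
    rw [div_le_iff₀' hN]
    exact hk1 i
  have hβabs : ∀ i, β i ≤ |x i| := by
    intro i
    have h1 : β i ≤ (y i) ^ (1/p) :=
      Real.rpow_le_rpow (by positivity) (hkN i) (by positivity)
    have h2 : (y i) ^ (1/p) = |x i| := by
      rw [hy, one_div]
      exact Real.rpow_rpow_inv (abs_nonneg _) (ne_of_gt hp0)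
    linarith
  have hβ0 : ∀ i, 0 ≤ β i := fun i => Real.rpow_nonneg (by positivity) _
  set c : Fin n → ℝ := phi n l p m with hc
  have hci : ∀ i, |x i - c i| = |x i| - β i := by
    intro i
    have hcval : c i = if x i < 0 then -(β i) else β i := by
      simp only [hc, phi, hβ, hmabs i, ← hNdef]
      rcases lt_or_ge (x i) 0 with hxi | hxi
      · rcases Nat.eq_zero_or_pos (k i) with hk0 | hk0
        · have hz : (0:ℝ) ^ p⁻¹ = 0 := Real.zero_rpow (by positivity)
          have hm0 : m i = 0 := by simp only [hm]; split <;> simp [hk0]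
          simp [hm0, hxi, hk0, hz]
        · have hneg : m i < 0 := by
            simp only [hm]; rw [if_pos hxi]; omega
          simp [hneg, hxi]
      · have hnneg : ¬ (m i < 0) := by
          simp only [hm]; rw [if_neg (not_lt.mpr hxi)]; omega
        simp [hnneg, not_lt.mpr hxi]
    rcases lt_or_ge (x i) 0 with hxi | hxi
    · rw [hcval, if_pos hxi]
      have habs : |x i| = -(x i) := abs_of_neg hxi
      have := hβabs i
      rw [abs_of_nonpos (by linarith)]
      linarith
    · rw [hcval, if_neg (not_lt.mpr hxi)]
      have habs : |x i| = x i := abs_of_nonneg hxi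
      have := hβabs i
      rw [abs_of_nonneg (by linarith)]
      linarith
  have hterm : ∀ i, |x i - c i| ^ p ≤ y i - (k i : ℝ) / N := by
    intro i
    rw [hci i]
    have h2 : (y i) ^ p⁻¹ = |x i| := Real.rpow_rpow_inv (abs_nonneg _) (ne_of_gt hp0)
    have h3 : β i = ((k i : ℝ) / N) ^ p⁻¹ := by rw [hβ, one_div]
    rw [← h2, h3]
    exact key_pow hp (by positivity) (hkN i)
  have hsum2 : ∑ i, |x i - c i| ^ p ≤ (n : ℝ) / N := by
    calc ∑ i, |x i - c i| ^ p ≤ ∑ i, (y i - (k i : ℝ) / N) :=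
          Finset.sum_le_sum fun i _ => hterm i
      _ = (∑ i, (N * y i - (k i : ℝ))) / N := by
          rw [Finset.sum_div]
          refine Finset.sum_congr rfl fun i _ => ?_
          field_simp
      _ ≤ (n : ℝ) / N := by
          gcongr
  set γ : ℝ := ((n:ℝ) / N) ^ (1/p) with hγ
  have hγpos : 0 < γ := Real.rpow_pos_of_pos (by positivity) _
  have hγp : γ ^ p = (n:ℝ) / N := by
    rw [hγ, one_div]
    exact Real.rpow_inv_rpow (by positivity) (ne_of_gt hp0)
  set w : Fin n → ℝ := fun i => (x i - c i) / γ with hw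
  have hwKp : w ∈ Kp n p := by
    show ∑ i, |w i| ^ p ≤ 1
    have : ∀ i, |w i| ^ p = |x i - c i| ^ p / γ ^ p := by
      intro i
      rw [hw]
      rw [abs_div, abs_of_pos hγpos, Real.div_rpow (abs_nonneg _) hγpos.le]
    rw [Finset.sum_congr rfl fun i _ => this i, ← Finset.sum_div, hγp]
    rw [div_le_one (by positivity)]
    exact hsum2
  refine Set.mem_add.mpr ⟨c, Set.mem_image_of_mem _ (by exact_mod_cast hmbox), γ • w,
    Set.smul_mem_smul_set hwKp, ?_⟩
  funext i
  simp only [Pi.add_apply, Pi.smul_apply, smul_eq_mul, hw]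
  field_simp
  ring


lemma partA {t b : ℝ} {n l : ℕ} (ht1 : 1 < t) (hn : 0 < n) (hb : 0 < b)
    (hgb : g b = t)
    (hl2 : t ^ n < (2 ^ (l + 1) * (n + l + 1).choose n : ℝ)) :
    ⌊b * (n : ℝ)⌋₊ ≤ l := by
  set k : ℕ := ⌊b * (n : ℝ)⌋₊ with hk
  have hn' : (0:ℝ) < n := by exact_mod_cast hn
  have hkb : (k : ℝ) ≤ b * n := Nat.floor_le (by positivity)
  have hb1 : (0:ℝ) < 1 + b := by linarith
  -- binomial bound : C(n+k,n) * b^k ≤ (1+b)^(n+k)  (natural powers)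
  have hbin : ((n + k).choose n : ℝ) * b ^ k ≤ (1 + b) ^ (n + k) := by
    have hexp := add_pow b 1 (n + k)
    simp only [one_pow, mul_one] at hexp
    have hterm : b ^ k * ((n + k).choose k : ℝ) ≤ (b + 1) ^ (n + k) := by
      rw [hexp]
      exact Finset.single_le_sum
        (f := fun j => b ^ j * ((n + k).choose j : ℝ))
        (fun j _ => by positivity) (Finset.mem_range.mpr (by omega))
    have hcs : (n + k).choose k = (n + k).choose n := by
      rw [← Nat.choose_symm (by omega : k ≤ n + k)]
      congr 1
      omega
    rw [hcs] at hterm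
    calc ((n + k).choose n : ℝ) * b ^ k = b ^ k * ((n + k).choose n : ℝ) := by ring
      _ ≤ (b + 1) ^ (n + k) := hterm
      _ = (1 + b) ^ (n + k) := by rw [add_comm]
  -- rewrite g b ^ n
  have hgpow : (g b) ^ n = (2:ℝ) ^ (b * n) * (1 + b) ^ n * ((1 + b) / b) ^ (b * n) := by
    have hsplit : (1 + b) ^ (1 + b) = (1 + b) * (1 + b) ^ b := by
      rw [Real.rpow_add hb1, Real.rpow_one]
    have h1 : g b = 2 ^ b * (1 + b) * ((1 + b) / b) ^ b := by
      rw [g, hsplit, Real.div_rpow hb1.le hb.le]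
      ring
    rw [h1, mul_pow, mul_pow]
    rw [← Real.rpow_natCast (2 ^ b) n, ← Real.rpow_mul (by norm_num)]
    rw [← Real.rpow_natCast (((1 + b) / b) ^ b) n, ← Real.rpow_mul (by positivity)]
  -- the key bound
  have hak : ((2:ℝ) ^ k * ((n + k).choose n : ℝ)) ≤ t ^ n := by
    rw [← hgb, hgpow]
    have e1 : (2:ℝ) ^ k ≤ (2:ℝ) ^ (b * n) := by
      rw [← Real.rpow_natCast 2 k]
      exact Real.rpow_le_rpow_of_exponent_le one_le_two hkb
    have e2 : ((n + k).choose n : ℝ) ≤ (1 + b) ^ n * ((1 + b) / b) ^ (b * n) := by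
      have e3 : ((n + k).choose n : ℝ) ≤ (1 + b) ^ (n + k) / b ^ k := by
        rw [le_div_iff₀ (by positivity)]
        exact hbin
      have e4 : (1 + b) ^ (n + k) / b ^ k = (1 + b) ^ n * ((1 + b) / b) ^ k := by
        rw [pow_add, div_pow]
        field_simp
      have e5 : ((1 + b) / b) ^ k ≤ ((1 + b) / b) ^ (b * n) := by
        rw [← Real.rpow_natCast ((1 + b) / b) k]
        apply Real.rpow_le_rpow_of_exponent_le _ hkb
        rw [le_div_iff₀ hb]
        linarith
      calc ((n + k).choose n : ℝ) ≤ (1 + b) ^ n * ((1 + b) / b) ^ k := by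
            rw [← e4]; exact e3
        _ ≤ (1 + b) ^ n * ((1 + b) / b) ^ (b * n) := by
            apply mul_le_mul_of_nonneg_left e5 (by positivity)
    calc (2:ℝ) ^ k * ((n + k).choose n : ℝ)
        ≤ (2:ℝ) ^ (b * n) * ((1 + b) ^ n * ((1 + b) / b) ^ (b * n)) := by
          apply mul_le_mul e1 e2 (by positivity) (by positivity)
      _ = (2:ℝ) ^ (b * n) * (1 + b) ^ n * ((1 + b) / b) ^ (b * n) := by ring
  -- conclude
  by_contra hcon
  push_neg at hcon
  have hmono : ((2:ℝ) ^ (l + 1) * ((n + l + 1).choose n : ℝ)) ≤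
      (2:ℝ) ^ k * ((n + k).choose n : ℝ) := by
    apply mul_le_mul
    · apply pow_le_pow_right₀ one_le_two; omega
    · exact_mod_cast Nat.choose_le_choose n (by omega : n + l + 1 ≤ n + k)
    · positivity
    · positivity
  linarith

/-- Let `p ≥ 1`, `t ∈ (1,2]`, `n` a positive integer, `b = b(t)` the positive solution
of `g b = t`, and `l = l(n,t)` the nonnegative integer with
`2^l·C(n+l,n) ≤ t^n < 2^(l+1)·C(n+l+1,n)`. Then
`Γ_{⌊t^n⌋}(Kₙ^p) ≤ (n/(n+l))^(1/p) ≤ (n/(n+⌊b·n⌋))^(1/p)`. -/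
theorem coveringFunctional_Kp_le (p : ℝ) (hp : 1 ≤ p)
    (t : ℝ) (ht1 : 1 < t) (ht2 : t ≤ 2) (n : ℕ) (hn : 0 < n)
    (b : ℝ) (hb : 0 < b) (hgb : g b = t)
    (l : ℕ) (hl1 : (2 ^ l * (n + l).choose n : ℝ) ≤ t ^ n)
    (hl2 : t ^ n < (2 ^ (l + 1) * (n + l + 1).choose n : ℝ)) :
    coveringFunctional ⌊t ^ n⌋₊ (Kp n p) ≤ ((n : ℝ) / ((n : ℝ) + l)) ^ (1 / p) ∧
      ((n : ℝ) / ((n : ℝ) + l)) ^ (1 / p) ≤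
        ((n : ℝ) / ((n : ℝ) + (⌊b * (n : ℝ)⌋₊ : ℝ))) ^ (1 / p) := by
  have hp0 : (0:ℝ) < p := lt_of_lt_of_le one_pos hp
  have hn' : (0:ℝ) < (n:ℝ) := by exact_mod_cast hn
  have hN : (0:ℝ) < (n:ℝ) + l := by positivity
  constructor
  · -- the covering bound
    set γ : ℝ := ((n : ℝ) / ((n : ℝ) + l)) ^ (1 / p) with hγ
    have hγpos : 0 < γ := Real.rpow_pos_of_pos (by positivity) _
    set C0 : Set (Fin n → ℝ) := phi n l p '' (boxM n l : Set (Fin n → ℤ)) with hC0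
    have hC0fin : C0.Finite := ((boxM n l).finite_toSet.image _)
    have hC0card : C0.ncard ≤ 2 ^ l * (n + l).choose n := by
      calc C0.ncard ≤ (boxM n l : Set (Fin n → ℤ)).ncard := Set.ncard_image_le (boxM n l).finite_toSet
        _ = (boxM n l).card := Set.ncard_coe_finset _
        _ ≤ 2 ^ l * (n + l).choose n := card_boxM_le
    have hm1 : 2 ^ l * (n + l).choose n ≤ ⌊t ^ n⌋₊ := by
      apply Nat.le_floor
      push_cast
      exact hl1
    haveI : Nonempty (Fin n) := ⟨⟨0, hn⟩⟩
    obtain ⟨C', hsub, -, hcard⟩ := Set.Infinite.exists_superset_ncard_eq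
      (Set.infinite_univ (α := Fin n → ℝ)) (Set.subset_univ C0) hC0fin
      (le_trans hC0card hm1)
    have hmpos : 0 < ⌊t ^ n⌋₊ := by
      have h1 : (1:ℕ) ≤ ⌊t ^ n⌋₊ := by
        apply Nat.le_floor
        norm_num
        exact one_le_pow₀ ht1.le
      omega
    have hC'fin : C'.Finite := by
      by_contra hinf
      rw [Set.Infinite.ncard hinf] at hcard
      omega
    have hcover : Kp n p ⊆ C' + γ • Kp n p :=
      (cover hp l hn).trans (Set.add_subset_add hsub Set.Subset.rfl)
    apply csInf_le ⟨0, fun γ' hγ' => hγ'.1.le⟩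
    exact ⟨hγpos, C', hC'fin, hcard, hcover⟩
  · -- monotonicity in the floor
    have hfl : ⌊b * (n : ℝ)⌋₊ ≤ l := partA ht1 hn hb hgb hl2
    have hfl' : ((⌊b * (n : ℝ)⌋₊ : ℝ)) ≤ (l : ℝ) := by exact_mod_cast hfl
    apply Real.rpow_le_rpow (by positivity) _ (by positivity)
    gcongr
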